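/- Discrete weak duality: for every (ρ, F) ∈ 𝒞_{N,𝒯} and every φ = (φ^k)_{k=1}^{N+1} ∈ (ℝ^𝒯)^{N+1} satisfying, componentwise in ℝ^{𝒯'} for every k ∈ {1,…,N}, 𝕀*((φ^{k+1} − φ^k)/τ) + (1/4) R_{𝒯'}((∇_Σ φ^k)² + (∇_Σ φ^{k+1})²) ≤ 0, it holds that B_{N,𝒯}(ρ, F) ≥ ⟨𝕀*φ^{N+1} − (τ/4) R_{𝒯'}(∇_Σ φ^{N+1})², ρ^f⟩_{𝒯'} − ⟨𝕀*φ^1 + (τ/4) R_{𝒯'}(∇_Σ φ^1)², ρ^in⟩_{𝒯'}. -/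

import Mathlib

open scoped BigOperators ENNReal RealInnerProductSpace
open Finset

namespace OTFV

/-- The Benamou–Brenier action density for a scalar flux value. -/
noncomputable def Bact (p q : ℝ) : ℝ≥0∞ :=
  if 0 < p then ENNReal.ofReal (q ^ 2 / (2 * p))
  else if p = 0 ∧ q = 0 then 0 else ⊤

/-- Combinatorial/metric data of an admissible TPFA mesh: cells `T`, internal
edges `E`; an edge `σ` joins the two distinct cells `e1 σ` and `e2 σ`. -/
structure Mesh (T E : Type*) where
  e1 : E → T
  e2 : E → T
  ne : ∀ σ, e1 σ ≠ e2 σ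
  m : T → ℝ
  m_pos : ∀ K, 0 < m K
  mS : E → ℝ
  mS_pos : ∀ σ, 0 < mS σ
  dS : E → ℝ
  dS_pos : ∀ σ, 0 < dS σ
  d1 : E → ℝ   -- d_{K,σ} for K = e1 σ
  d2 : E → ℝ   -- d_{L,σ} for L = e2 σ
  d1_pos : ∀ σ, 0 < d1 σ
  d2_pos : ∀ σ, 0 < d2 σ
  d_sum : ∀ σ, d1 σ + d2 σ = dS σ

variable {T T' E : Type*}

/-- A conservative flux is encoded by its value `F σ = F_{K,σ}` on the side `K = e1 σ`
(so that `F_{L,σ} = -F σ` for `L = e2 σ`).  Discrete divergence. -/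
noncomputable def divT [Fintype E] [DecidableEq T] (M : Mesh T E) (F : E → ℝ) (K : T) : ℝ :=
  (∑ σ, ((if M.e1 σ = K then F σ else 0) + (if M.e2 σ = K then -F σ else 0)) * M.mS σ) / M.m K

/-- Discrete gradient, oriented from `e1 σ` to `e2 σ` (the `(K,σ)` component, `K = e1 σ`). -/
noncomputable def gradS (M : Mesh T E) (a : T → ℝ) (σ : E) : ℝ :=
  (a (M.e2 σ) - a (M.e1 σ)) / M.dS σ

/-- Linear (weighted arithmetic mean) reconstruction on edges. -/
noncomputable def linRec (M : Mesh T E) (a : T → ℝ) (σ : E) : ℝ :=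
  (M.d1 σ / M.dS σ) * a (M.e1 σ) + (M.d2 σ / M.dS σ) * a (M.e2 σ)

/-- Injection from coarse densities to fine densities, `p` maps a fine cell to its coarse cell. -/
def inj (p : T → T') (ρ : T' → ℝ) : T → ℝ := fun K => ρ (p K)

/-- Mass of a coarse cell. -/
noncomputable def coarseM [Fintype T] [DecidableEq T'] (M : Mesh T E) (p : T → T') (K' : T') : ℝ :=
  ∑ K ∈ Finset.univ.filter (fun K => p K = K'), M.m K

/-- Adjoint of the injection. -/
noncomputable def injAdj [Fintype T] [DecidableEq T'] (M : Mesh T E) (p : T → T')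
    (a : T → ℝ) (K' : T') : ℝ :=
  (∑ K ∈ Finset.univ.filter (fun K => p K = K'), a K * M.m K) / coarseM M p K'

/-- Adjoint of the linear reconstruction, `(L_Σ^* u)_K = Σ_{σ∈Σ_K} u_σ m_σ d_{K,σ}/m_K`. -/
noncomputable def linRecAdj [Fintype E] [DecidableEq T] (M : Mesh T E) (u : E → ℝ) (K : T) : ℝ :=
  (∑ σ, ((if M.e1 σ = K then u σ * M.mS σ * M.d1 σ else 0) +
          (if M.e2 σ = K then u σ * M.mS σ * M.d2 σ else 0))) / M.m K

/-- `R_{𝒯'} = 𝕀^* ∘ L_Σ^*`. -/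
noncomputable def coarseRec [Fintype T] [Fintype E] [DecidableEq T] [DecidableEq T']
    (M : Mesh T E) (p : T → T') (u : E → ℝ) (K' : T') : ℝ :=
  injAdj M p (linRecAdj M u) K'

/-- Weighted scalar product on the coarse space. -/
noncomputable def iprodC [Fintype T] [Fintype T'] [DecidableEq T'] (M : Mesh T E) (p : T → T')
    (a b : T' → ℝ) : ℝ :=
  ∑ K', a K' * b K' * coarseM M p K'

/-- The discrete Benamou–Brenier functional `B_{N,𝒯}`; the time step is `τ = 1/(N+1)`,
`ρ k.succ` stands for `ρ^k` and `ρ k.castSucc` for `ρ^{k-1}`, `k = 1, …, N+1`. -/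
noncomputable def Benergy [Fintype E] [Fintype T'] (M : Mesh T E) (p : T → T') (N : ℕ)
    (ρ : Fin (N+2) → T' → ℝ) (F : Fin (N+1) → E → ℝ) : ℝ≥0∞ :=
  if ∀ k K', 0 ≤ ρ k K' then
    ∑ k : Fin (N+1),
      ENNReal.ofReal ((1:ℝ)/(N+1)) *
        ∑ σ, Bact (linRec M (inj p (fun K' => (ρ k.succ K' + ρ k.castSucc K') / 2)) σ) (F k σ) *
          ENNReal.ofReal (M.mS σ * M.dS σ)
  else ⊤

/-- The discrete continuity equation. -/
def ContEq [Fintype E] [DecidableEq T] (M : Mesh T E) (p : T → T') (N : ℕ)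
    (ρ : Fin (N+2) → T' → ℝ) (F : Fin (N+1) → E → ℝ) : Prop :=
  ∀ (k : Fin (N+1)) (K : T),
    (ρ k.succ (p K) - ρ k.castSucc (p K)) / ((1:ℝ)/(N+1)) + divT M (F k) K = 0

/-- The constraint set `𝒞_{N,𝒯}`. -/
def Cset [Fintype E] [DecidableEq T] (M : Mesh T E) (p : T → T') (N : ℕ)
    (ρin ρf : T' → ℝ) : Set ((Fin (N+2) → T' → ℝ) × (Fin (N+1) → E → ℝ)) :=
  {x | x.1 0 = ρin ∧ x.1 (Fin.last (N+1)) = ρf ∧ ContEq M p N x.1 x.2}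

/-- The (halved, squared) discrete Wasserstein distance: `W² = 2 inf B`. -/
noncomputable def Wdist2 [Fintype E] [Fintype T'] [DecidableEq T] (M : Mesh T E) (p : T → T')
    (N : ℕ) (ρin ρf : T' → ℝ) : ℝ≥0∞ :=
  2 * ⨅ (x : (Fin (N+2) → T' → ℝ) × (Fin (N+1) → E → ℝ)) (_ : x ∈ Cset M p N ρin ρf),
    Benergy M p N x.1 x.2

/-- Logarithmic barrier. -/
noncomputable def Jlog (x : ℝ) : EReal := if 0 < x then ((- Real.log x : ℝ) : EReal) else ⊤

/-- The barrier functional `J_{N,𝒯}` (only the interior times `k = 1, …, N`). -/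
noncomputable def Jbar [Fintype T] [Fintype T'] [DecidableEq T'] (M : Mesh T E) (p : T → T')
    (N : ℕ) (ρ : Fin (N+2) → T' → ℝ) : EReal :=
  ∑ k : Fin N, (((1:ℝ)/(N+1) : ℝ) : EReal) *
    ∑ K', Jlog (ρ (k.succ.castSucc) K') * ((coarseM M p K' : ℝ) : EReal)

/-- Perturbed objective `B_{N,𝒯} + μ J_{N,𝒯}`, with values in `EReal`. -/
noncomputable def Pobj [Fintype T] [Fintype T'] [Fintype E] [DecidableEq T'] (M : Mesh T E)
    (p : T → T') (N : ℕ) (μ : ℝ) (ρ : Fin (N+2) → T' → ℝ) (F : Fin (N+1) → E → ℝ) : EReal :=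
  (Benergy M p N ρ F : EReal) + (μ : EReal) * Jbar M p N ρ

/-- Connectivity of the graph of cells induced by the internal edges. -/
def MeshConnected (M : Mesh T E) : Prop :=
  ∀ K L : T, Relation.ReflTransGen
    (fun a b => ∃ σ, (M.e1 σ = a ∧ M.e2 σ = b) ∨ (M.e1 σ = b ∧ M.e2 σ = a)) K L

end OTFV

open OTFV

section WeakDualityHelpers

variable {T T' E : Type*}

lemma ibp_aux [Fintype T] [Fintype E] [DecidableEq T] (M : Mesh T E) (ψ : T → ℝ) (G : E → ℝ) :
    ∑ K, ψ K * divT M G K * M.m K = ∑ σ, G σ * (ψ (M.e1 σ) - ψ (M.e2 σ)) * M.mS σ := by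
  unfold divT
  have h1 : ∀ K : T, ψ K *
      ((∑ σ, ((if M.e1 σ = K then G σ else 0) + (if M.e2 σ = K then -G σ else 0)) * M.mS σ) /
        M.m K) * M.m K
      = ∑ σ, ψ K * (((if M.e1 σ = K then G σ else 0) + (if M.e2 σ = K then -G σ else 0)) *
          M.mS σ) := by
    intro K
    rw [mul_assoc, div_mul_cancel₀ _ (M.m_pos K).ne', Finset.mul_sum]
  simp only [h1]
  rw [Finset.sum_comm]
  refine Finset.sum_congr rfl fun σ _ => ?_
  simp only [mul_add, add_mul, mul_ite, ite_mul, mul_zero, zero_mul]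
  rw [Finset.sum_add_distrib, Finset.sum_ite_eq, Finset.sum_ite_eq]
  simp only [Finset.mem_univ, if_true]
  ring

lemma adjC_aux [Fintype T] [Fintype T'] [DecidableEq T'] (M : Mesh T E) (p : T → T')
    (hp : ∀ K', 0 < coarseM M p K') (a : T → ℝ) (b : T' → ℝ) :
    ∑ K', injAdj M p a K' * b K' * coarseM M p K' = ∑ K, a K * b (p K) * M.m K := by
  unfold injAdj
  have h1 : ∀ K' : T', (∑ K ∈ Finset.univ.filter (fun K => p K = K'), a K * M.m K) /
      coarseM M p K' * b K' * coarseM M p K'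
      = ∑ K ∈ Finset.univ.filter (fun K => p K = K'), a K * b (p K) * M.m K := by
    intro K'
    rw [div_mul_eq_mul_div, div_mul_cancel₀ _ (hp K').ne', Finset.sum_mul]
    refine Finset.sum_congr rfl fun K hK => ?_
    rw [Finset.mem_filter] at hK
    rw [hK.2]; ring
  simp only [h1]
  exact Finset.sum_fiberwise _ _ _

lemma adjRec_aux [Fintype T] [Fintype E] [DecidableEq T] (M : Mesh T E) (u : E → ℝ) (c : T → ℝ) :
    ∑ K, linRecAdj M u K * c K * M.m K
      = ∑ σ, u σ * (c (M.e1 σ) * M.d1 σ + c (M.e2 σ) * M.d2 σ) * M.mS σ := by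
  unfold linRecAdj
  have h1 : ∀ K : T, (∑ σ, ((if M.e1 σ = K then u σ * M.mS σ * M.d1 σ else 0) +
        (if M.e2 σ = K then u σ * M.mS σ * M.d2 σ else 0))) / M.m K * c K * M.m K
      = ∑ σ, c K * ((if M.e1 σ = K then u σ * M.mS σ * M.d1 σ else 0) +
          (if M.e2 σ = K then u σ * M.mS σ * M.d2 σ else 0)) := by
    intro K
    rw [div_mul_eq_mul_div, div_mul_cancel₀ _ (M.m_pos K).ne', Finset.sum_mul]
    exact Finset.sum_congr rfl fun σ _ => by ring
  simp only [h1]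
  rw [Finset.sum_comm]
  refine Finset.sum_congr rfl fun σ _ => ?_
  simp only [mul_add, mul_ite, mul_zero]
  rw [Finset.sum_add_distrib, Finset.sum_ite_eq, Finset.sum_ite_eq]
  simp only [Finset.mem_univ, if_true]
  ring

lemma recPair_aux [Fintype T] [Fintype T'] [Fintype E] [DecidableEq T] [DecidableEq T']
    (M : Mesh T E) (p : T → T') (hp : ∀ K', 0 < coarseM M p K') (u : E → ℝ) (b : T' → ℝ) :
    ∑ K', coarseRec M p u K' * b K' * coarseM M p K'
      = ∑ σ, u σ * linRec M (inj p b) σ * (M.mS σ * M.dS σ) := by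
  unfold coarseRec
  rw [adjC_aux M p hp _ b, adjRec_aux M u (fun K => b (p K))]
  refine Finset.sum_congr rfl fun σ _ => ?_
  unfold linRec inj
  have h := (M.dS_pos σ).ne'
  field_simp

lemma young_aux (r q g : ℝ) (hr : 0 ≤ r) (h : 0 < r ∨ q = 0) :
    q * g - g ^ 2 * r / 2 ≤ q ^ 2 / (2 * r) := by
  rcases h with h | h
  · rw [le_div_iff₀ (by positivity)]
    nlinarith [sq_nonneg (q - r * g)]
  · subst h
    have h1 : (0:ℝ) ^ 2 / (2 * r) = 0 := by simp
    rw [h1]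
    nlinarith [mul_nonneg (sq_nonneg g) hr]

lemma injAdj_smul_div [Fintype T] [DecidableEq T'] (M : Mesh T E) (p : T → T') (a b : T → ℝ)
    (t : ℝ) (ht : t ≠ 0) (K' : T') :
    t * injAdj M p (fun K => (a K - b K) / t) K' = injAdj M p a K' - injAdj M p b K' := by
  unfold injAdj
  rw [← sub_div, ← Finset.sum_sub_distrib, ← mul_div_assoc, Finset.mul_sum]
  congr 1
  refine Finset.sum_congr rfl fun K _ => ?_
  field_simp

lemma linRecAdj_add [Fintype E] [DecidableEq T] (M : Mesh T E) (u v : E → ℝ) (K : T) :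
    linRecAdj M (fun σ => u σ + v σ) K = linRecAdj M u K + linRecAdj M v K := by
  unfold linRecAdj
  rw [← add_div, ← Finset.sum_add_distrib]
  congr 1
  refine Finset.sum_congr rfl fun σ _ => ?_
  split_ifs <;> ring

lemma coarseRec_congr_add [Fintype T] [Fintype E] [DecidableEq T] [DecidableEq T']
    (M : Mesh T E) (p : T → T') (w u v : E → ℝ) (hw : ∀ σ, w σ = u σ + v σ) (K' : T') :
    coarseRec M p w K' = coarseRec M p u K' + coarseRec M p v K' := by
  unfold coarseRec
  rw [show linRecAdj M w = fun K => linRecAdj M u K + linRecAdj M v K from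
    funext fun K => by rw [show w = fun σ => u σ + v σ from funext hw]; exact linRecAdj_add M u v K]
  unfold injAdj
  rw [← add_div, ← Finset.sum_add_distrib]
  congr 1
  exact Finset.sum_congr rfl fun K _ => by ring

end WeakDualityHelpers

theorem weak_duality
    {T T' E : Type*} [Fintype T] [Fintype T'] [Fintype E] [DecidableEq T] [DecidableEq T']
    (M : Mesh T E) (p : T → T') (N : ℕ) (hp : ∀ K', 0 < coarseM M p K')
    (ρin ρf : T' → ℝ) (hin : ∀ K', 0 ≤ ρin K') (hf : ∀ K', 0 ≤ ρf K')
    (hmass : ∑ K', ρin K' * coarseM M p K' = ∑ K', ρf K' * coarseM M p K')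
    (x : (Fin (N+2) → T' → ℝ) × (Fin (N+1) → E → ℝ)) (hx : x ∈ Cset M p N ρin ρf)
    (φ : Fin (N+1) → T → ℝ)
    (hφ : ∀ (k : Fin N) (K' : T'),
      injAdj M p (fun K => (φ k.succ K - φ k.castSucc K) / ((1:ℝ)/(N+1))) K' +
        (1/4) * coarseRec M p
          (fun σ => (gradS M (φ k.castSucc) σ)^2 + (gradS M (φ k.succ) σ)^2) K' ≤ 0) :
    ((iprodC M p (fun K' => injAdj M p (φ (Fin.last N)) K' -
        (((1:ℝ)/(N+1))/4) * coarseRec M p (fun σ => (gradS M (φ (Fin.last N)) σ)^2) K') ρf -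
      iprodC M p (fun K' => injAdj M p (φ 0) K' +
        (((1:ℝ)/(N+1))/4) * coarseRec M p (fun σ => (gradS M (φ 0) σ)^2) K') ρin : ℝ) : EReal)
      ≤ (Benergy M p N x.1 x.2 : EReal) := by

  obtain ⟨h0, hlast, hce⟩ := hx
  have hτ : (0:ℝ) < (1:ℝ)/(N+1) := by positivity
  by_cases hρ : ∀ (k : Fin (N+2)) (K' : T'), 0 ≤ x.1 k K'
  swap
  · rw [Benergy, if_neg hρ, EReal.coe_ennreal_top]
    exact le_top
  -- abbreviations
  obtain ⟨r, hr⟩ : ∃ r : Fin (N+1) → E → ℝ, ∀ k σ,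
      r k σ = linRec M (inj p (fun K' => (x.1 k.succ K' + x.1 k.castSucc K') / 2)) σ :=
    ⟨_, fun _ _ => rfl⟩
  obtain ⟨A, hA'⟩ : ∃ A : Fin (N+1) → Fin (N+2) → ℝ, ∀ i j,
      A i j = ∑ K', injAdj M p (φ i) K' * x.1 j K' * coarseM M p K' :=
    ⟨_, fun _ _ => rfl⟩
  obtain ⟨Q, hQ'⟩ : ∃ Q : Fin (N+1) → Fin (N+2) → ℝ, ∀ i j,
      Q i j = ∑ K', coarseRec M p (fun σ => (gradS M (φ i) σ)^2) K' * x.1 j K' * coarseM M p K' :=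
    ⟨_, fun _ _ => rfl⟩
  have hr0 : ∀ k σ, 0 ≤ r k σ := by
    intro k σ
    rw [hr]
    unfold linRec inj
    apply add_nonneg
    · exact mul_nonneg (div_nonneg (M.d1_pos σ).le (M.dS_pos σ).le)
        (by have := hρ k.succ (p (M.e1 σ)); have := hρ k.castSucc (p (M.e1 σ)); linarith)
    · exact mul_nonneg (div_nonneg (M.d2_pos σ).le (M.dS_pos σ).le)
        (by have := hρ k.succ (p (M.e2 σ)); have := hρ k.castSucc (p (M.e2 σ)); linarith)
  by_cases hgood : ∀ (k : Fin (N+1)) (σ : E), 0 < r k σ ∨ x.2 k σ = 0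
  swap
  · push_neg at hgood
    obtain ⟨k₀, σ₀, hr₀, hF₀⟩ := hgood
    have hr₀' : r k₀ σ₀ = 0 := le_antisymm hr₀ (hr0 k₀ σ₀)
    have hBtop : Benergy M p N x.1 x.2 = ⊤ := by
      rw [Benergy, if_pos hρ, ENNReal.sum_eq_top]
      refine ⟨k₀, Finset.mem_univ _, ?_⟩
      rw [ENNReal.mul_eq_top]
      left
      refine ⟨(ENNReal.ofReal_pos.mpr hτ).ne', ?_⟩
      rw [ENNReal.sum_eq_top]
      refine ⟨σ₀, Finset.mem_univ _, ?_⟩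
      rw [ENNReal.mul_eq_top]
      right
      refine ⟨?_, (ENNReal.ofReal_pos.mpr (mul_pos (M.mS_pos σ₀) (M.dS_pos σ₀))).ne'⟩
      rw [show linRec M (inj p fun K' => (x.1 k₀.succ K' + x.1 k₀.castSucc K') / 2) σ₀
          = r k₀ σ₀ from (hr k₀ σ₀).symm, hr₀']
      rw [Bact, if_neg (lt_irrefl (0:ℝ)), if_neg (by simp [hF₀])]
    rw [hBtop, EReal.coe_ennreal_top]
    exact le_top
  -- main identities
  have hA : ∀ k : Fin (N+1), A k k.succ - A k k.castSucc
      = ((1:ℝ)/(N+1)) * ∑ σ, x.2 k σ * gradS M (φ k) σ * (M.mS σ * M.dS σ) := by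
    intro k
    rw [hA', hA', adjC_aux M p hp, adjC_aux M p hp, ← Finset.sum_sub_distrib]
    have key : ∀ K : T, φ k K * x.1 k.succ (p K) * M.m K - φ k K * x.1 k.castSucc (p K) * M.m K
        = -((1:ℝ)/(N+1)) * (φ k K * divT M (x.2 k) K * M.m K) := by
      intro K
      have h2 : x.1 k.succ (p K) - x.1 k.castSucc (p K)
          = -divT M (x.2 k) K * ((1:ℝ)/(N+1)) := by
        rw [← div_eq_iff (ne_of_gt hτ)]
        linarith [hce k K]
      linear_combination (φ k K * M.m K) * h2
    simp only [key]
    rw [← Finset.mul_sum, ibp_aux M (φ k) (x.2 k)]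
    have e : (∑ σ, x.2 k σ * gradS M (φ k) σ * (M.mS σ * M.dS σ))
        = ∑ σ, -(x.2 k σ * (φ k (M.e1 σ) - φ k (M.e2 σ)) * M.mS σ) := by
      refine Finset.sum_congr rfl fun σ _ => ?_
      have h := (M.dS_pos σ).ne'
      unfold gradS
      field_simp
      ring
    rw [e, Finset.sum_neg_distrib]
    ring
  have hQsum : ∀ k : Fin (N+1), Q k k.succ + Q k k.castSucc
      = ∑ σ, (gradS M (φ k) σ)^2 * (2 * r k σ) * (M.mS σ * M.dS σ) := by
    intro k
    rw [hQ', hQ', recPair_aux M p hp, recPair_aux M p hp, ← Finset.sum_add_distrib]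
    refine Finset.sum_congr rfl fun σ _ => ?_
    rw [hr]
    unfold linRec inj
    ring
  have hk : ∀ k : Fin (N+1), (A k k.succ - A k k.castSucc)
      - ((1:ℝ)/(N+1))/4 * (Q k k.succ + Q k k.castSucc)
      ≤ ((1:ℝ)/(N+1)) * ∑ σ : E, (x.2 k σ)^2 / (2 * r k σ) * (M.mS σ * M.dS σ) := by
    intro k
    rw [hA k, hQsum k]
    have comb : ((1:ℝ)/(N+1)) * (∑ σ, x.2 k σ * gradS M (φ k) σ * (M.mS σ * M.dS σ))
        - ((1:ℝ)/(N+1))/4 * (∑ σ, (gradS M (φ k) σ)^2 * (2 * r k σ) * (M.mS σ * M.dS σ))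
        = ((1:ℝ)/(N+1)) * ∑ σ, (x.2 k σ * gradS M (φ k) σ * (M.mS σ * M.dS σ)
            - (gradS M (φ k) σ)^2 * (2 * r k σ) * (M.mS σ * M.dS σ) / 4) := by
      simp only [Finset.mul_sum]
      rw [← Finset.sum_sub_distrib]
      exact Finset.sum_congr rfl fun σ _ => by ring
    rw [comb]
    refine mul_le_mul_of_nonneg_left (Finset.sum_le_sum fun σ _ => ?_) hτ.le
    have hm : (0:ℝ) < M.mS σ * M.dS σ := mul_pos (M.mS_pos σ) (M.dS_pos σ)
    have hy := young_aux (r k σ) (x.2 k σ) (gradS M (φ k) σ) (hr0 k σ) (hgood k σ)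
    nlinarith [mul_le_mul_of_nonneg_right hy hm.le]
  -- Abel summation
  have abel1 : ∑ k : Fin (N+1), (A k k.succ - A k k.castSucc)
      = A (Fin.last N) (Fin.last (N+1)) - A 0 0
        + ∑ k : Fin N, (A k.castSucc (k.succ.castSucc) - A k.succ (k.succ.castSucc)) := by
    rw [Finset.sum_sub_distrib, Fin.sum_univ_castSucc (fun k : Fin (N+1) => A k k.succ),
      Fin.sum_univ_succ (fun k : Fin (N+1) => A k k.castSucc), Finset.sum_sub_distrib]
    simp only [Fin.succ_castSucc, Fin.succ_last, Fin.castSucc_zero]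
    ring
  have abel2 : ∑ k : Fin (N+1), (Q k k.succ + Q k k.castSucc)
      = Q (Fin.last N) (Fin.last (N+1)) + Q 0 0
        + ∑ k : Fin N, (Q k.castSucc (k.succ.castSucc) + Q k.succ (k.succ.castSucc)) := by
    rw [Finset.sum_add_distrib, Fin.sum_univ_castSucc (fun k : Fin (N+1) => Q k k.succ),
      Fin.sum_univ_succ (fun k : Fin (N+1) => Q k k.castSucc), Finset.sum_add_distrib]
    simp only [Fin.succ_castSucc, Fin.succ_last, Fin.castSucc_zero]
    ring
  have heq : ∑ k : Fin (N+1), ((A k k.succ - A k k.castSucc)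
        - ((1:ℝ)/(N+1))/4 * (Q k k.succ + Q k k.castSucc))
      = (A (Fin.last N) (Fin.last (N+1)) - A 0 0
          + ∑ k : Fin N, (A k.castSucc (k.succ.castSucc) - A k.succ (k.succ.castSucc)))
        - ((1:ℝ)/(N+1))/4 * (Q (Fin.last N) (Fin.last (N+1)) + Q 0 0
          + ∑ k : Fin N, (Q k.castSucc (k.succ.castSucc) + Q k.succ (k.succ.castSucc))) := by
    rw [Finset.sum_sub_distrib, abel1, ← Finset.mul_sum, abel2]
  -- interior nonpositivity
  have hneg : ∀ k : Fin N,
      A k.succ (k.succ.castSucc) - A k.castSucc (k.succ.castSucc)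
        + ((1:ℝ)/(N+1))/4 * (Q k.castSucc (k.succ.castSucc) + Q k.succ (k.succ.castSucc)) ≤ 0 := by
    intro k
    have hw : ∀ K' : T', injAdj M p (φ k.succ) K' - injAdj M p (φ k.castSucc) K'
        + ((1:ℝ)/(N+1))/4 * (coarseRec M p (fun σ => (gradS M (φ k.castSucc) σ)^2) K'
          + coarseRec M p (fun σ => (gradS M (φ k.succ) σ)^2) K') ≤ 0 := by
      intro K'
      have h := hφ k K'
      rw [coarseRec_congr_add M p _ (fun σ => (gradS M (φ k.castSucc) σ)^2)
        (fun σ => (gradS M (φ k.succ) σ)^2) (fun σ => rfl) K'] at h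
      have h2 := injAdj_smul_div M p (φ k.succ) (φ k.castSucc) ((1:ℝ)/(N+1)) (ne_of_gt hτ) K'
      have h4 := mul_le_mul_of_nonneg_left h hτ.le
      rw [mul_zero] at h4
      nlinarith [h4, h2]
    have hsum : A k.succ (k.succ.castSucc) - A k.castSucc (k.succ.castSucc)
        + ((1:ℝ)/(N+1))/4 * (Q k.castSucc (k.succ.castSucc) + Q k.succ (k.succ.castSucc))
        = ∑ K', (injAdj M p (φ k.succ) K' - injAdj M p (φ k.castSucc) K'
            + ((1:ℝ)/(N+1))/4 * (coarseRec M p (fun σ => (gradS M (φ k.castSucc) σ)^2) K'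
              + coarseRec M p (fun σ => (gradS M (φ k.succ) σ)^2) K'))
            * x.1 (k.succ.castSucc) K' * coarseM M p K' := by
      rw [hA', hA', hQ', hQ']
      simp only [Finset.mul_sum, ← Finset.sum_sub_distrib, ← Finset.sum_add_distrib]
      exact Finset.sum_congr rfl fun K' _ => by ring
    rw [hsum]
    refine Finset.sum_nonpos fun K' _ => ?_
    exact mul_nonpos_of_nonpos_of_nonneg
      (mul_nonpos_of_nonpos_of_nonneg (hw K') (hρ _ K')) (hp K').le
  have hbr : ∑ k : Fin N, (A k.succ (k.succ.castSucc) - A k.castSucc (k.succ.castSucc)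
      + ((1:ℝ)/(N+1))/4 * (Q k.castSucc (k.succ.castSucc) + Q k.succ (k.succ.castSucc))) ≤ 0 :=
    Finset.sum_nonpos fun k _ => hneg k
  have hsplit : ∑ k : Fin N, (A k.succ (k.succ.castSucc) - A k.castSucc (k.succ.castSucc)
      + ((1:ℝ)/(N+1))/4 * (Q k.castSucc (k.succ.castSucc) + Q k.succ (k.succ.castSucc)))
      = -(∑ k : Fin N, (A k.castSucc (k.succ.castSucc) - A k.succ (k.succ.castSucc)))
        + ((1:ℝ)/(N+1))/4 * ∑ k : Fin N,
            (Q k.castSucc (k.succ.castSucc) + Q k.succ (k.succ.castSucc)) := by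
    rw [Finset.sum_add_distrib, ← Finset.mul_sum]
    congr 1
    rw [← Finset.sum_neg_distrib]
    exact Finset.sum_congr rfl fun k _ => by ring
  have hsum_le : ∑ k : Fin (N+1), ((A k k.succ - A k k.castSucc)
      - ((1:ℝ)/(N+1))/4 * (Q k k.succ + Q k k.castSucc))
      ≤ ∑ k : Fin (N+1),
          (1:ℝ)/(N+1) * ∑ σ : E, (x.2 k σ)^2 / (2 * r k σ) * (M.mS σ * M.dS σ) :=
    Finset.sum_le_sum fun k _ => hk k
  -- identification of the Benergy
  have hB : Benergy M p N x.1 x.2 = ENNReal.ofReal (∑ k : Fin (N+1),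
      (1:ℝ)/(N+1) * ∑ σ : E, (x.2 k σ)^2 / (2 * r k σ) * (M.mS σ * M.dS σ)) := by
    rw [Benergy, if_pos hρ]
    rw [ENNReal.ofReal_sum_of_nonneg (fun k _ => mul_nonneg hτ.le (Finset.sum_nonneg fun σ _ =>
      mul_nonneg (div_nonneg (sq_nonneg _) (by linarith [hr0 k σ]))
        (mul_pos (M.mS_pos σ) (M.dS_pos σ)).le))]
    refine Finset.sum_congr rfl fun k _ => ?_
    rw [ENNReal.ofReal_mul hτ.le]
    congr 1
    rw [ENNReal.ofReal_sum_of_nonneg (fun σ _ =>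
      mul_nonneg (div_nonneg (sq_nonneg _) (by linarith [hr0 k σ]))
        (mul_pos (M.mS_pos σ) (M.dS_pos σ)).le)]
    refine Finset.sum_congr rfl fun σ _ => ?_
    rw [ENNReal.ofReal_mul (div_nonneg (sq_nonneg _) (by linarith [hr0 k σ]))]
    congr 1
    rw [show linRec M (inj p fun K' => (x.1 k.succ K' + x.1 k.castSucc K') / 2) σ
        = r k σ from (hr k σ).symm]
    rcases hgood k σ with h | h
    · rw [Bact, if_pos h]
    · rcases eq_or_lt_of_le (hr0 k σ) with h0 | h0
      · rw [← h0, h, Bact, if_neg (lt_irrefl (0:ℝ)), if_pos ⟨rfl, rfl⟩]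
        norm_num
      · rw [Bact, if_pos h0]
  -- expression of the left-hand side
  have hRHS : iprodC M p (fun K' => injAdj M p (φ (Fin.last N)) K' -
        (((1:ℝ)/(N+1))/4) * coarseRec M p (fun σ => (gradS M (φ (Fin.last N)) σ)^2) K') ρf -
      iprodC M p (fun K' => injAdj M p (φ 0) K' +
        (((1:ℝ)/(N+1))/4) * coarseRec M p (fun σ => (gradS M (φ 0) σ)^2) K') ρin
      = A (Fin.last N) (Fin.last (N+1)) - ((1:ℝ)/(N+1))/4 * Q (Fin.last N) (Fin.last (N+1))
        - (A 0 0 + ((1:ℝ)/(N+1))/4 * Q 0 0) := by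
    rw [hA' (Fin.last N) (Fin.last (N+1)), hA' 0 0, hQ' (Fin.last N) (Fin.last (N+1)), hQ' 0 0]
    unfold iprodC
    rw [← h0, ← hlast]
    simp only [Finset.mul_sum, ← Finset.sum_sub_distrib, ← Finset.sum_add_distrib]
    exact Finset.sum_congr rfl fun K' _ => by ring
  rw [hB, EReal.coe_ennreal_ofReal]
  apply EReal.coe_le_coe_iff.mpr
  refine le_trans ?_ (le_max_left _ _)
  rw [hRHS]
  linarith [hsum_le, hbr, hsplit, heq]
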